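/- Let r be a real number with |r| < 1. Define W(r) = ∑_{n odd, n≥1} ζ(n+1) r^{n+1} and W̄(r) = ∑_{n odd, n≥3} ζ(n) r^n. Then W(r) + W̄(r) = r ( 1/(1 − r) + (r − 1) ∑_{n≥1} 1/(n(n + 1 − r)) ). -/

import Mathlib

/-- `W(r) = ∑_{n odd, n ≥ 1} ζ(n+1) r^(n+1)` (sum over odd `n = 2k+1`). -/
noncomputable def W (r : ℝ) : ℝ :=
  ∑' k : ℕ, (riemannZeta (2 * k + 2)).re * r ^ (2 * k + 2)

/-- `W̄(r) = ∑_{n odd, n ≥ 3} ζ(n) r^n` (sum over odd `n = 2k+3`). -/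
noncomputable def Wbar (r : ℝ) : ℝ :=
  ∑' k : ℕ, (riemannZeta (2 * k + 3)).re * r ^ (2 * k + 3)


open Filter

lemma aux_base_summable : Summable (fun n : ℕ => 1 / ((n : ℝ) + 1) ^ 2) := by
  have h := (Real.summable_one_div_nat_pow (p := 2)).mpr one_lt_two
  have h2 := (summable_nat_add_iff 1).mpr h
  exact h2.congr (fun n => by push_cast; ring)

lemma aux_den_summable (b c : ℝ) (hb : 1 ≤ b) (hc : 1 ≤ c) :
    Summable (fun n : ℕ => 1 / (((n : ℝ) + b) * ((n : ℝ) + c))) := by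
  apply Summable.of_nonneg_of_le (f := fun n : ℕ => 1 / ((n : ℝ) + 1) ^ 2)
  · intro n
    have h1 : (0:ℝ) < (n : ℝ) + b := by positivity
    have h2 : (0:ℝ) < (n : ℝ) + c := by positivity
    positivity
  · intro n
    have h1 : (0:ℝ) < ((n : ℝ) + 1) * ((n : ℝ) + 1) := by positivity
    have h2 : ((n : ℝ) + 1) * ((n : ℝ) + 1) ≤ ((n : ℝ) + b) * ((n : ℝ) + c) := by
      have h3 : (0:ℝ) ≤ (n:ℝ) + 1 := by positivity
      gcongr <;> linarith
    calc 1 / (((n : ℝ) + b) * ((n : ℝ) + c)) ≤ 1 / (((n : ℝ) + 1) * ((n : ℝ) + 1)) :=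
          one_div_le_one_div_of_le h1 h2
      _ = 1 / ((n : ℝ) + 1) ^ 2 := by ring
  · exact aux_base_summable

lemma aux_inner_summable (m : ℕ) : Summable (fun n : ℕ => (1 / ((n : ℝ) + 1)) ^ (m + 2)) := by
  have h := (Real.summable_one_div_nat_pow (p := m + 2)).mpr (by omega)
  have h2 := (summable_nat_add_iff 1).mpr h
  exact h2.congr (fun n => by push_cast; rw [div_pow, one_pow])

lemma aux_zeta_re (m : ℕ) :
    (riemannZeta ((m : ℂ) + 2)).re = ∑' n : ℕ, (1 / ((n : ℝ) + 1)) ^ (m + 2) := by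
  have h1 : 1 < ((m : ℂ) + 2).re := by
    simp only [Complex.add_re, Complex.natCast_re, Complex.re_ofNat]
    have : (0:ℝ) ≤ (m:ℝ) := Nat.cast_nonneg m
    linarith
  rw [zeta_eq_tsum_one_div_nat_add_one_cpow h1]
  have h2 : ∀ n : ℕ, (1 / ((n : ℂ) + 1) ^ ((m : ℂ) + 2)) =
      (((1 / ((n : ℝ) + 1)) ^ (m + 2) : ℝ) : ℂ) := by
    intro n
    have h3 : ((m : ℂ) + 2) = ((m + 2 : ℕ) : ℂ) := by push_cast; ring
    rw [h3, Complex.cpow_natCast]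
    push_cast
    rw [div_pow, one_pow]
  rw [tsum_congr h2, ← Complex.ofReal_tsum, Complex.ofReal_re]

lemma aux_telescope : ∑' n : ℕ, 1 / (((n : ℝ) + 1) * ((n : ℝ) + 2)) = 1 := by
  have hs := (aux_den_summable 1 2 le_rfl one_le_two).hasSum
  have hten := hs.tendsto_sum_nat
  have hpart : ∀ N : ℕ, ∑ i ∈ Finset.range N, 1 / (((i : ℝ) + 1) * ((i : ℝ) + 2)) =
      1 - 1 / ((N : ℝ) + 1) := by
    intro N
    have h0 := Finset.sum_range_sub' (fun i : ℕ => 1 / ((i : ℝ) + 1)) N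
    simp only [Nat.cast_zero, zero_add, div_one] at h0
    rw [← h0]
    apply Finset.sum_congr rfl
    intro i _
    have h1 : ((i : ℝ) + 1) ≠ 0 := by positivity
    have h2 : ((i : ℝ) + 2) ≠ 0 := by positivity
    have h4 : ((((i:ℕ)+1 : ℕ)) : ℝ) + 1 = (i : ℝ) + 2 := by push_cast; ring
    rw [h4, div_sub_div _ _ h1 h2]
    congr 1
    ring
  have hten2 : Tendsto (fun N : ℕ => ∑ i ∈ Finset.range N, 1 / (((i : ℝ) + 1) * ((i : ℝ) + 2)))
      atTop (nhds 1) := by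
    simp only [hpart]
    have := (tendsto_one_div_add_atTop_nhds_zero_nat (𝕜 := ℝ)).const_sub 1
    simpa using this
  exact tendsto_nhds_unique hten hten2

set_option maxHeartbeats 2000000 in
theorem stmt12 (r : ℝ) (hr : |r| < 1) :
    W r + Wbar r =
      r * (1 / (1 - r) + (r - 1) * ∑' n : ℕ, 1 / (((n : ℝ) + 1) * (((n : ℝ) + 1) + 1 - r))) := by
  have hrlt : r < 1 := lt_of_le_of_lt (le_abs_self r) hr
  have hr1' : (1:ℝ) - r ≠ 0 := by linarith
  have hr1pos : (0:ℝ) < 1 - r := by linarith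
  set Z : ℕ → ℝ := fun m => (riemannZeta ((m : ℂ) + 2)).re * r ^ (m + 2) with hZdef
  set F : ℕ → ℕ → ℝ := fun m n => (r / ((n : ℝ) + 1)) ^ (m + 2) with hFdef
  have hcast : ∀ n : ℕ, (1:ℝ) ≤ (n:ℝ) + 1 := fun n => by
    have : (0:ℝ) ≤ (n:ℝ) := Nat.cast_nonneg n; linarith
  have hxn : ∀ n : ℕ, |r / ((n : ℝ) + 1)| < 1 := by
    intro n
    rw [abs_div]
    have h1 : (0:ℝ) < (n:ℝ) + 1 := by positivity
    rw [abs_of_pos h1, div_lt_one h1]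
    exact lt_of_lt_of_le hr (hcast n)
  have hF : Summable (Function.uncurry F) := by
    apply Summable.of_norm_bounded (g := fun p : ℕ × ℕ => |r| ^ p.1 * (1 / ((p.2 : ℝ) + 1)) ^ 2)
    · exact Summable.mul_of_nonneg (summable_geometric_of_lt_one (abs_nonneg r) hr)
        (aux_inner_summable 0) (fun m => by positivity) (fun n => by positivity)
    · rintro ⟨m, n⟩
      simp only [Function.uncurry, hFdef, Real.norm_eq_abs, abs_pow, abs_div]
      have h1 : (0:ℝ) < (n:ℝ) + 1 := by positivity
      rw [abs_of_pos h1]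
      calc (|r| / ((n:ℝ) + 1)) ^ (m + 2) = |r| ^ (m + 2) * (1 / ((n:ℝ)+1)) ^ (m + 2) := by
            rw [← mul_pow]; ring_nf
        _ ≤ |r| ^ m * (1 / ((n:ℝ)+1)) ^ 2 := by
            apply mul_le_mul
            · exact pow_le_pow_of_le_one (abs_nonneg r) hr.le (by omega)
            · exact pow_le_pow_of_le_one (by positivity)
                (by rw [div_le_one h1]; exact hcast n) (by omega)
            · positivity
            · positivity
  have hZ : Summable Z := by
    apply Summable.of_norm_bounded
      (g := fun m => (∑' n : ℕ, (1 / ((n : ℝ) + 1)) ^ 2) * |r| ^ m)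
    · exact (summable_geometric_of_lt_one (abs_nonneg r) hr).mul_left _
    · intro m
      simp only [hZdef, Real.norm_eq_abs, abs_mul, abs_pow]
      have hre := aux_zeta_re m
      have hnn : 0 ≤ (riemannZeta ((m : ℂ) + 2)).re := by
        rw [hre]; exact tsum_nonneg (fun n => by positivity)
      rw [abs_of_nonneg hnn, hre]
      have h1 : (∑' n : ℕ, (1 / ((n : ℝ) + 1)) ^ (m + 2)) ≤ ∑' n : ℕ, (1 / ((n : ℝ) + 1)) ^ 2 := by
        apply Summable.tsum_le_tsum _ (aux_inner_summable m) (by simpa using aux_inner_summable 0)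
        intro n
        apply pow_le_pow_of_le_one (by positivity) _ (by omega)
        rw [div_le_one (by positivity)]
        exact hcast n
      have hsum2nn : 0 ≤ ∑' n : ℕ, (1 / ((n : ℝ) + 1)) ^ 2 :=
        tsum_nonneg (fun n => by positivity)
      calc (∑' n : ℕ, (1 / ((n : ℝ) + 1)) ^ (m + 2)) * |r| ^ (m + 2)
          ≤ (∑' n : ℕ, (1 / ((n : ℝ) + 1)) ^ 2) * |r| ^ (m + 2) :=
            mul_le_mul_of_nonneg_right h1 (by positivity)
        _ ≤ (∑' n : ℕ, (1 / ((n : ℝ) + 1)) ^ 2) * |r| ^ m :=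
            mul_le_mul_of_nonneg_left
              (pow_le_pow_of_le_one (abs_nonneg r) hr.le (by omega)) hsum2nn
  -- Step 1
  have step1 : W r + Wbar r = ∑' m : ℕ, Z m := by
    have he : ∀ k : ℕ, (riemannZeta (2 * (k:ℂ) + 2)).re * r ^ (2 * k + 2) = Z (2 * k) := by
      intro k
      simp only [hZdef]
      congr 3
      push_cast
      ring
    have ho : ∀ k : ℕ, (riemannZeta (2 * (k:ℂ) + 3)).re * r ^ (2 * k + 3) = Z (2 * k + 1) := by
      intro k
      have h1 : ((2 * k + 1 : ℕ) : ℂ) + 2 = 2 * (k:ℂ) + 3 := by push_cast; ring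
      have h2 : 2 * k + 1 + 2 = 2 * k + 3 := by omega
      simp only [hZdef, h1, h2]
    have hW : W r = ∑' k : ℕ, Z (2 * k) := by
      rw [W]; exact tsum_congr he
    have hWb : Wbar r = ∑' k : ℕ, Z (2 * k + 1) := by
      rw [Wbar]; exact tsum_congr ho
    rw [hW, hWb]
    exact tsum_even_add_odd
      (hZ.comp_injective (fun a b h => by omega))
      (hZ.comp_injective (fun a b h => by omega))
  -- Step 2: Z m = ∑' n, F m n
  have step2 : ∀ m : ℕ, Z m = ∑' n : ℕ, F m n := by
    intro m
    simp only [hZdef, hFdef]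
    rw [aux_zeta_re m, ← tsum_mul_right]
    apply tsum_congr
    intro n
    rw [div_pow, div_pow, one_pow]
    ring
  -- Step 3: swap
  have step3 : ∑' m : ℕ, ∑' n : ℕ, F m n = ∑' n : ℕ, ∑' m : ℕ, F m n := by
    refine (Summable.tsum_comm' hF (fun m => hF.prod_factor m) (fun n => ?_)).symm
    exact (summable_nat_add_iff 2).mpr
      (summable_geometric_of_norm_lt_one (by rw [Real.norm_eq_abs]; exact hxn n))
  -- Step 4: inner geometric sum
  have step4 : ∀ n : ℕ, ∑' m : ℕ, F m n = r ^ 2 / (((n:ℝ) + 1) * (((n:ℝ) + 1) - r)) := by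
    intro n
    have hx := hxn n
    have hgeo : ∑' m : ℕ, F m n = (r / ((n:ℝ)+1)) ^ 2 * (1 - r / ((n:ℝ)+1))⁻¹ := by
      simp only [hFdef]
      have : ∀ m : ℕ, (r / ((n : ℝ) + 1)) ^ (m + 2) =
          (r / ((n:ℝ)+1)) ^ 2 * (r / ((n:ℝ)+1)) ^ m := fun m => by ring
      rw [tsum_congr this, tsum_mul_left,
        tsum_geometric_of_norm_lt_one (by rw [Real.norm_eq_abs]; exact hx)]
    rw [hgeo]
    have h1 : ((n:ℝ) + 1) ≠ 0 := by positivity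
    have h2 : ((n:ℝ) + 1) - r ≠ 0 := by
      have := hcast n; linarith
    field_simp
  -- assemble T
  have hTsum : W r + Wbar r = ∑' n : ℕ, r ^ 2 / (((n:ℝ) + 1) * (((n:ℝ) + 1) - r)) := by
    rw [step1, tsum_congr step2, step3, tsum_congr step4]
  -- summabilities for final algebra
  have hS : Summable (fun n : ℕ => 1 / (((n : ℝ) + 1) * (((n : ℝ) + 1) + 1 - r))) := by
    have := aux_den_summable 1 (2 - r) le_rfl (by linarith)
    exact this.congr (fun n => by congr 1; ring)
  have hT1 : Summable (fun n : ℕ => r ^ 2 / (((n:ℝ) + 1) * (((n:ℝ) + 1) - r))) := by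
    apply (summable_nat_add_iff 1).mp
    have := (aux_den_summable 2 (2 - r) one_le_two (by linarith)).mul_left (r^2)
    apply this.congr
    intro n
    push_cast
    rw [mul_one_div]
    congr 2 <;> ring
  have hA : Summable (fun n : ℕ => r / (((n:ℝ) + 1) * ((n:ℝ) + 2))) := by
    have := (aux_den_summable 1 2 le_rfl one_le_two).mul_left r
    exact this.congr (fun n => by rw [mul_one_div])
  have hB : Summable (fun n : ℕ => r * (1 - r) / (((n : ℝ) + 1) * (((n : ℝ) + 1) + 1 - r))) := by
    have := hS.mul_left (r * (1 - r))
    exact this.congr (fun n => by rw [mul_one_div])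
  -- split off n = 0
  have hsplit := Summable.tsum_eq_zero_add hT1
  rw [hTsum, hsplit]
  have hzero : r ^ 2 / ((((0:ℕ):ℝ) + 1) * ((((0:ℕ):ℝ) + 1) - r)) = r ^ 2 / (1 - r) := by
    norm_num
  -- per-term identity on the tail
  have hterm : ∀ n : ℕ, r ^ 2 / ((((n+1:ℕ):ℝ) + 1) * ((((n+1:ℕ):ℝ) + 1) - r)) =
      r / (((n:ℝ) + 1) * ((n:ℝ) + 2)) -
      r * (1 - r) / (((n : ℝ) + 1) * (((n : ℝ) + 1) + 1 - r)) := by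
    intro n
    have e1 : (((n+1:ℕ):ℝ) + 1) = (n:ℝ) + 2 := by push_cast; ring
    rw [e1]
    have h1 : ((n:ℝ) + 1) ≠ 0 := by positivity
    have h2 : ((n:ℝ) + 2) ≠ 0 := by positivity
    have h3 : ((n:ℝ) + 2) - r ≠ 0 := by have := hcast n; linarith
    have h4 : ((n:ℝ) + 1) + 1 - r ≠ 0 := by have := hcast n; linarith
    field_simp
    ring
  rw [hzero, tsum_congr hterm, Summable.tsum_sub hA hB]
  have hAval : ∑' n : ℕ, r / (((n:ℝ) + 1) * ((n:ℝ) + 2)) = r := by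
    have : ∀ n : ℕ, r / (((n:ℝ) + 1) * ((n:ℝ) + 2)) =
        r * (1 / (((n:ℝ) + 1) * ((n:ℝ) + 2))) := fun n => by rw [mul_one_div]
    rw [tsum_congr this, tsum_mul_left, aux_telescope, mul_one]
  have hBval : ∑' n : ℕ, r * (1 - r) / (((n : ℝ) + 1) * (((n : ℝ) + 1) + 1 - r)) =
      r * (1 - r) * ∑' n : ℕ, 1 / (((n : ℝ) + 1) * (((n : ℝ) + 1) + 1 - r)) := by
    rw [← tsum_mul_left]
    exact tsum_congr (fun n => by rw [mul_one_div])
  rw [hAval, hBval]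
  field_simp
  ring
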